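/- Misspecified limit of minimum JSD: let P₀ be a probability distribution on a finite set, not contained in the nested models, and let δ* = min over all models and parameters of sqrt(D_JS(P₀, P_θ)), attained at θ^(l*) in model l*. If D_JS(P₀, P̂_D) → 0 almost surely (by the strong law of large numbers applied to empirical frequencies), then for every l ≥ l*, D_JS(P̂_D, P_{θ̂^(l)_JSD}) → (δ*)² almost surely, where θ̂^(l)_JSD minimizes D_JS(P̂_D, ·) over model l. -/

import Mathlib

open Real Finset Filter

/-- Kullback–Leibler divergence for categorical distributions (convention 0 ln 0 = 0). -/
noncomputable def klDiv {α : Type*} [Fintype α] (P Q : α → ℝ) : ℝ :=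
  ∑ x, P x * Real.log (P x / Q x)

/-- Jensen–Shannon divergence. -/
noncomputable def jsDiv {α : Type*} [Fintype α] (P Q : α → ℝ) : ℝ :=
  (1/2) * klDiv P (fun x => (P x + Q x) / 2) + (1/2) * klDiv Q (fun x => (P x + Q x) / 2)

/-- Pointwise Jensen–Shannon term. -/
noncomputable def jsd (p q : ℝ) : ℝ :=
  (1/2) * (p * Real.log p) + (1/2) * (q * Real.log q) - ((p+q)/2) * Real.log ((p+q)/2)

lemma jsd_continuous : Continuous fun pq : ℝ × ℝ => jsd pq.1 pq.2 := by
  unfold jsd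
  have h := Real.continuous_mul_log
  fun_prop

lemma mul_log_div_eq (p m : ℝ) (hp : 0 ≤ p) (hm : m ≠ 0) :
    p * Real.log (p / m) = p * Real.log p - p * Real.log m := by
  rcases eq_or_lt_of_le hp with h | h
  · simp [← h]
  · rw [Real.log_div (ne_of_gt h) hm]; ring

lemma jsd_eq_pointwise (p q : ℝ) (hp : 0 ≤ p) (hq : 0 ≤ q) (hpq : 0 < p + q) :
    (1/2) * (p * Real.log (p / ((p+q)/2))) + (1/2) * (q * Real.log (q / ((p+q)/2)))
      = jsd p q := by
  have hm : ((p+q)/2) ≠ 0 := by positivity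
  rw [mul_log_div_eq p _ hp hm, mul_log_div_eq q _ hq hm]
  unfold jsd; ring

lemma jsDiv_eq_sum {α : Type*} [Fintype α] {P Q : α → ℝ}
    (hP : ∀ x, 0 ≤ P x) (hQ : ∀ x, 0 ≤ Q x) (hPQ : ∀ x, 0 < P x + Q x) :
    jsDiv P Q = ∑ x, jsd (P x) (Q x) := by
  unfold jsDiv klDiv
  rw [Finset.mul_sum, Finset.mul_sum, ← Finset.sum_add_distrib]
  exact Finset.sum_congr rfl fun x _ => jsd_eq_pointwise _ _ (hP x) (hQ x) (hPQ x)

lemma jsd_nonneg {p q : ℝ} (hp : 0 ≤ p) (hq : 0 ≤ q) : 0 ≤ jsd p q := by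
  have h := Real.strictConvexOn_mul_log.convexOn.2 (Set.mem_Ici.2 hp) (Set.mem_Ici.2 hq)
    (by norm_num : (0:ℝ) ≤ 1/2) (by norm_num : (0:ℝ) ≤ 1/2) (by norm_num)
  simp only [smul_eq_mul] at h
  have : (1/2 : ℝ) * p + (1/2) * q = (p+q)/2 := by ring
  rw [this] at h
  unfold jsd; linarith

lemma jsd_pos {p q : ℝ} (hp : 0 ≤ p) (hq : 0 ≤ q) (hne : p ≠ q) : 0 < jsd p q := by
  have h := Real.strictConvexOn_mul_log.2 (Set.mem_Ici.2 hp) (Set.mem_Ici.2 hq) hne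
    (by norm_num : (0:ℝ) < 1/2) (by norm_num : (0:ℝ) < 1/2) (by norm_num)
  simp only [smul_eq_mul] at h
  have : (1/2 : ℝ) * p + (1/2) * q = (p+q)/2 := by ring
  rw [this] at h
  unfold jsd; linarith

/-- Misspecified limit of minimum JSD: if P₀ lies outside the nested models, δ* is the
minimal value of √D_JS(P₀,·) over all models, attained at Pstar ∈ M lstar, and the empirical
distributions P̂ satisfy D_JS(P₀, P̂ₙ) → 0, then for every l ≥ l*,
D_JS(P̂ₙ, P_{θ̂^(l)}) → (δ*)². -/
theorem misspecified_min_jsDiv_limit {α : Type*} [Fintype α] {L : ℕ}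
    (P0 : α → ℝ) (hP0 : ∀ x, 0 < P0 x) (hP0sum : ∑ x, P0 x = 1)
    (M : Fin L → Set (α → ℝ)) (hnested : Monotone M)
    (hMpmf : ∀ l, ∀ R ∈ M l, (∀ x, 0 < R x) ∧ ∑ x, R x = 1)
    (hP0out : ∀ l, P0 ∉ M l)
    (Phat : ℕ → α → ℝ)
    (hPhat : ∀ n, (∀ x, 0 ≤ Phat n x) ∧ ∑ x, Phat n x = 1)
    (hPhatconv : Tendsto (fun n => jsDiv P0 (Phat n)) atTop (nhds 0))
    (δstar : ℝ) (hδpos : 0 < δstar)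
    (lstar : Fin L) (Pstar : α → ℝ) (hPstarMem : Pstar ∈ M lstar)
    (hδeq : δstar = Real.sqrt (jsDiv P0 Pstar))
    (hδmin : ∀ l, ∀ R ∈ M l, δstar ≤ Real.sqrt (jsDiv P0 R))
    (Rhat : Fin L → ℕ → α → ℝ)
    (hRhatMem : ∀ l n, Rhat l n ∈ M l)
    (hRhatMin : ∀ l n, ∀ R ∈ M l, jsDiv (Phat n) (Rhat l n) ≤ jsDiv (Phat n) R) :
    ∀ l, lstar ≤ l →
      Tendsto (fun n => jsDiv (Phat n) (Rhat l n)) atTop (nhds (δstar ^ 2)) := by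
  classical
  intro l hl
  -- basic coordinate bounds
  have hle1 : ∀ (R : α → ℝ), (∀ x, 0 ≤ R x) → ∑ x, R x = 1 → ∀ x, R x ≤ 1 := by
    intro R h0 hsum x
    calc R x ≤ ∑ y, R y := Finset.single_le_sum (fun y _ => h0 y) (Finset.mem_univ x)
    _ = 1 := hsum
  have hP0le : ∀ x, P0 x ≤ 1 := hle1 P0 (fun x => (hP0 x).le) hP0sum
  have hPhatle : ∀ n x, Phat n x ≤ 1 := fun n => hle1 _ (hPhat n).1 (hPhat n).2
  have hMle : ∀ l', ∀ R ∈ M l', ∀ x, R x ≤ 1 := fun l' R hR =>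
    hle1 R (fun x => ((hMpmf l' R hR).1 x).le) (hMpmf l' R hR).2
  -- jsDiv identities
  have hidP0 : ∀ (Q : α → ℝ), (∀ x, 0 ≤ Q x) → jsDiv P0 Q = ∑ x, jsd (P0 x) (Q x) := by
    intro Q hQ
    exact jsDiv_eq_sum (fun x => (hP0 x).le) hQ (fun x => by have := hP0 x; have := hQ x; linarith)
  have hidPhat : ∀ n (Q : α → ℝ), (∀ x, 0 < Q x) →
      jsDiv (Phat n) Q = ∑ x, jsd (Phat n x) (Q x) := by
    intro n Q hQ
    exact jsDiv_eq_sum (hPhat n).1 (fun x => (hQ x).le)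
      (fun x => by have := (hPhat n).1 x; have := hQ x; linarith)
  -- Step 1: Phat → P0 in the product topology
  have hK : IsCompact (Set.pi Set.univ fun _ : α => Set.Icc (0:ℝ) 1) :=
    isCompact_univ_pi fun _ => isCompact_Icc
  have hmem : ∀ n, Phat n ∈ Set.pi Set.univ fun _ : α => Set.Icc (0:ℝ) 1 := by
    intro n x _; exact ⟨(hPhat n).1 x, hPhatle n x⟩
  have hG : Continuous fun Q : α → ℝ => ∑ x, jsd (P0 x) (Q x) := by
    apply continuous_finset_sum
    intro x _
    exact jsd_continuous.comp (continuous_const.prodMk (continuous_apply x))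
  have hconv : Tendsto Phat atTop (nhds P0) := by
    apply tendsto_of_subseq_tendsto
    intro ns hns
    obtain ⟨Q, hQmem, ms, hms, hmstend⟩ := hK.tendsto_subseq (fun n => hmem (ns n))
    refine ⟨ms, ?_⟩
    have hQnn : ∀ x, 0 ≤ Q x := fun x => (hQmem x (Set.mem_univ x)).1
    -- jsDiv P0 (Phat (ns (ms n))) → jsDiv P0 Q, and also → 0
    have h1 : Tendsto (fun n => jsDiv P0 (Phat (ns (ms n)))) atTop
        (nhds (∑ x, jsd (P0 x) (Q x))) := by
      have := (hG.tendsto Q).comp hmstend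
      have heq : ∀ n, jsDiv P0 (Phat (ns (ms n)))
          = (fun Q : α → ℝ => ∑ x, jsd (P0 x) (Q x)) ((Phat ∘ ns ∘ ms) n) := by
        intro n; exact hidP0 _ ((hPhat _).1)
      simpa [Function.comp_def, heq] using this
    have h2 : Tendsto (fun n => jsDiv P0 (Phat (ns (ms n)))) atTop (nhds 0) := by
      have hns' : Tendsto ns atTop atTop := hns
      exact hPhatconv.comp (hns'.comp hms.tendsto_atTop)
    have hzero : (∑ x, jsd (P0 x) (Q x)) = 0 := tendsto_nhds_unique h1 h2
    have hQP0 : Q = P0 := by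
      funext x
      by_contra hne
      have hterm : jsd (P0 x) (Q x) = 0 := by
        have := (Finset.sum_eq_zero_iff_of_nonneg
          (fun y _ => jsd_nonneg (hP0 y).le (hQnn y))).1 hzero x (Finset.mem_univ x)
        exact this
      have := jsd_pos (hP0 x).le (hQnn x) (fun h => hne (h.symm))
      linarith [hterm ▸ this]
    rw [hQP0] at hmstend
    exact hmstend
  -- Step 2: uniform continuity of jsd on [0,1]²
  have hKsq : IsCompact ((Set.Icc (0:ℝ) 1) ×ˢ (Set.Icc (0:ℝ) 1)) :=
    isCompact_Icc.prod isCompact_Icc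
  have hUC : UniformContinuousOn (fun pq : ℝ × ℝ => jsd pq.1 pq.2)
      ((Set.Icc (0:ℝ) 1) ×ˢ (Set.Icc (0:ℝ) 1)) :=
    hKsq.uniformContinuousOn_of_continuous jsd_continuous.continuousOn
  -- δ*² = jsDiv P0 Pstar, and δ*² ≤ jsDiv P0 R for R ∈ M l
  have hPstar_pos := (hMpmf lstar Pstar hPstarMem).1
  have hjsPstar_nonneg : 0 ≤ jsDiv P0 Pstar := by
    rw [hidP0 Pstar (fun x => (hPstar_pos x).le)]
    exact Finset.sum_nonneg fun x _ => jsd_nonneg (hP0 x).le (hPstar_pos x).le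
  have hδsq : δstar ^ 2 = jsDiv P0 Pstar := by
    rw [hδeq, Real.sq_sqrt hjsPstar_nonneg]
  have hδsqle : ∀ n, δstar ^ 2 ≤ jsDiv P0 (Rhat l n) := by
    intro n
    exact (Real.le_sqrt' hδpos).1 (hδmin l _ (hRhatMem l n))
  have hPstarMl : Pstar ∈ M l := hnested hl hPstarMem
  -- main ε-argument
  rw [Metric.tendsto_atTop]
  intro ε hε
  set A : ℕ := Fintype.card α with hA
  have hA0 : 0 < (A:ℝ) + 1 := by positivity
  set ε' : ℝ := ε / (2 * ((A:ℝ) + 1)) with hε'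
  have hε'pos : 0 < ε' := by positivity
  obtain ⟨δ, hδ0, hδ⟩ := (Metric.uniformContinuousOn_iff.1 hUC) ε' hε'pos
  -- eventually all coordinates of Phat n are δ-close to P0
  have hcoord : ∀ᶠ n in atTop, ∀ x, dist (Phat n x) (P0 x) < δ := by
    rw [Filter.eventually_all]
    intro x
    have hx : Tendsto (fun n => Phat n x) atTop (nhds (P0 x)) :=
      ((continuous_apply x).tendsto P0).comp hconv
    exact Metric.tendsto_nhds.1 hx δ hδ0
  -- key uniform estimate
  have key : ∀ n, (∀ x, dist (Phat n x) (P0 x) < δ) → ∀ Q : α → ℝ,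
      (∀ x, 0 < Q x) → (∀ x, Q x ≤ 1) →
      |jsDiv (Phat n) Q - jsDiv P0 Q| ≤ (A : ℝ) * ε' := by
    intro n hn Q hQ0 hQ1
    rw [hidPhat n Q hQ0, hidP0 Q (fun x => (hQ0 x).le), ← Finset.sum_sub_distrib]
    calc |∑ x, (jsd (Phat n x) (Q x) - jsd (P0 x) (Q x))|
        ≤ ∑ x, |jsd (Phat n x) (Q x) - jsd (P0 x) (Q x)| :=
          Finset.abs_sum_le_sum_abs _ _
      _ ≤ ∑ _x : α, ε' := by
          apply Finset.sum_le_sum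
          intro x _
          have ha : ((Phat n x, Q x) : ℝ × ℝ) ∈ (Set.Icc (0:ℝ) 1) ×ˢ (Set.Icc (0:ℝ) 1) :=
            ⟨⟨(hPhat n).1 x, hPhatle n x⟩, ⟨(hQ0 x).le, hQ1 x⟩⟩
          have hb : ((P0 x, Q x) : ℝ × ℝ) ∈ (Set.Icc (0:ℝ) 1) ×ˢ (Set.Icc (0:ℝ) 1) :=
            ⟨⟨(hP0 x).le, hP0le x⟩, ⟨(hQ0 x).le, hQ1 x⟩⟩
          have hdist : dist ((Phat n x, Q x) : ℝ × ℝ) ((P0 x, Q x) : ℝ × ℝ) < δ := by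
            rw [Prod.dist_eq]
            simp only [dist_self]
            rw [max_eq_left dist_nonneg]
            exact hn x
          have := hδ _ ha _ hb hdist
          rw [Real.dist_eq] at this
          exact this.le
      _ = (A : ℝ) * ε' := by
          rw [Finset.sum_const, Finset.card_univ, nsmul_eq_mul]
  -- conclude
  obtain ⟨N, hN⟩ := eventually_atTop.1 hcoord
  refine ⟨N, fun n hn => ?_⟩
  have hc := hN n hn
  have hRpos := (hMpmf l _ (hRhatMem l n)).1
  have hRle := hMle l _ (hRhatMem l n)
  have hkeyR := key n hc (Rhat l n) hRpos hRle
  have hkeyS := key n hc Pstar hPstar_pos (hMle lstar Pstar hPstarMem)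
  have hub : jsDiv (Phat n) (Rhat l n) ≤ δstar ^ 2 + (A : ℝ) * ε' := by
    have h1 := hRhatMin l n Pstar hPstarMl
    have h2 := (abs_le.1 hkeyS).2
    rw [hδsq]
    linarith
  have hlb : δstar ^ 2 - (A : ℝ) * ε' ≤ jsDiv (Phat n) (Rhat l n) := by
    have h2 := (abs_le.1 hkeyR).1
    have h3 := hδsqle n
    linarith
  have hAε : (A : ℝ) * ε' < ε := by
    have heq : ε' * (2 * ((A : ℝ) + 1)) = ε := by
      rw [hε']; field_simp
    nlinarith [mul_nonneg (Nat.cast_nonneg A : (0:ℝ) ≤ A) hε'pos.le, hε'pos]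
  rw [Real.dist_eq]
  exact abs_lt.2 ⟨by linarith, by linarith⟩
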